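/- Fix (d₂,…,d_S) ∈ ℝ^{S−1}, set d₁ := 0, d_{1j} := d'_{1j}, and d_{sj} := d_s + d'_{sj} for s = 2,…,S. For a gene i, define h_i(μ_i, γ_{2i},…,γ_{Si}) = (1/(2σ_i²)) [ Σ_{j=1}^{n₁} (x_{1ij} − μ_i − d_{1j})² + Σ_{s=2}^S Σ_{j=1}^{n_s} (x_{sij} − μ_i − γ_{si} − d_{sj})² ]. Then the difference between the constrained minimum min_{μ_i ∈ ℝ} h_i(μ_i, 0,…,0) and the unconstrained minimum min_{(μ_i,γ) ∈ ℝ^S} h_i(μ_i, γ_{2i},…,γ_{Si}) equals g_i(d₂,…,d_S) = (1/(2σ_i²)) { Σ_{s=1}^S n_s (μ'_{si} − d_s)² − (1/n) [ Σ_{s=1}^S n_s (μ'_{si} − d_s) ]² }. -/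

import Mathlib

lemma sum_sq_decomp (N : ℕ) (y : Fin (N+1) → ℝ) (μ : ℝ) :
    ∑ j, (y j - μ)^2
      = (∑ j, (y j - (∑ k, y k)/((N:ℝ)+1))^2)
        + ((N:ℝ)+1) * ((∑ k, y k)/((N:ℝ)+1) - μ)^2 := by
  have hN : ((N:ℝ)+1) ≠ 0 := by positivity
  set T := ∑ k, y k with hT
  set yb := T / ((N:ℝ)+1) with hyb
  have hTyb : T = ((N:ℝ)+1) * yb := by rw [hyb, mul_comm, div_mul_cancel₀ T hN]
  have h1 : ∀ j : Fin (N+1), (y j - μ)^2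
      = (y j - yb)^2 + (2*(yb - μ))*(y j) + ((yb-μ)^2 - 2*(yb-μ)*yb) := by
    intro j; ring
  have h2 : ∑ j, (y j - μ)^2
      = (∑ j, (y j - yb)^2) + (2*(yb - μ))*T
        + ((N:ℝ)+1) * ((yb-μ)^2 - 2*(yb-μ)*yb) := by
    simp_rw [h1, Finset.sum_add_distrib, ← Finset.mul_sum, Finset.sum_const,
      Finset.card_fin, ← hT]
    ring
  rw [h2, hTyb]; ring



/- STATEMENT 5 -/
theorem constrained_minus_unconstrained_equals_g
    (S m : ℕ) (ns : Fin (S + 2) → ℕ)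
    (x : (s : Fin (S + 2)) → Fin (m + 1) → Fin (ns s + 1) → ℝ)
    (σ2 : Fin (m + 1) → ℝ) (hσ2 : ∀ i, 0 < σ2 i)
    (n : ℝ) (hn : n = ∑ s, ((ns s : ℝ) + 1))
    (d' : (s : Fin (S + 2)) → Fin (ns s + 1) → ℝ)
    (hd' : ∀ s j, d' s j = (∑ i, (x s i j - x s i 0) / σ2 i) / (∑ i, 1 / σ2 i))
    (μ' : Fin (S + 2) → Fin (m + 1) → ℝ)
    (hμ' : ∀ s i, μ' s i = (∑ j, (x s i j - d' s j)) / ((ns s : ℝ) + 1))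
    (g : Fin (m + 1) → (Fin (S + 2) → ℝ) → ℝ)
    (hg : ∀ i dvv, g i dvv = (1 / (2 * σ2 i)) *
      ((∑ s, ((ns s : ℝ) + 1) * (μ' s i - dvv s) ^ 2)
        - (1 / n) * (∑ s, ((ns s : ℝ) + 1) * (μ' s i - dvv s)) ^ 2))
    -- fixed (d₁, d₂, …, d_S) with d₁ = 0, and the induced d_{sj}
    (dv : Fin (S + 2) → ℝ) (hdv0 : dv 0 = 0)
    (d : (s : Fin (S + 2)) → Fin (ns s + 1) → ℝ)
    (hd : ∀ s j, d s j = dv s + d' s j)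
    -- a fixed gene i and its residual sum of squares h_i
    (i : Fin (m + 1))
    (h : ℝ → (Fin (S + 1) → ℝ) → ℝ)
    (hh : ∀ μi γv, h μi γv = (1 / (2 * σ2 i)) *
      ((∑ j, (x 0 i j - μi - d 0 j) ^ 2)
        + ∑ s : Fin (S + 1), ∑ j, (x s.succ i j - μi - γv s - d s.succ j) ^ 2)) :
    ∃ a b : ℝ,
      IsLeast {v : ℝ | ∃ μi : ℝ, v = h μi (fun _ => 0)} a ∧
      IsLeast {v : ℝ | ∃ (μi : ℝ) (γv : Fin (S + 1) → ℝ), v = h μi γv} b ∧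
      a - b = g i dv := by
  set c := 1 / (2 * σ2 i) with hc
  have hcpos : 0 < c := by
    have := hσ2 i; positivity
  set N : Fin (S+2) → ℝ := fun s => (ns s : ℝ) + 1 with hN
  have hNpos : ∀ s, 0 < N s := fun s => by positivity
  set y : (s : Fin (S+2)) → Fin (ns s + 1) → ℝ := fun s j => x s i j - d s j with hy
  set yb : Fin (S+2) → ℝ := fun s => (∑ j, y s j) / N s with hyb
  set Q : Fin (S+2) → ℝ := fun s => ∑ j, (y s j - yb s)^2 with hQ
  have key : ∀ (s : Fin (S+2)) (μ : ℝ),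
      ∑ j, (y s j - μ)^2 = Q s + N s * (yb s - μ)^2 := by
    intro s μ; exact sum_sq_decomp (ns s) (y s) μ
  -- ybar in terms of μ' and dv
  have hybar : ∀ s, yb s = μ' s i - dv s := by
    intro s
    have hs : ∑ j, y s j = (∑ j, (x s i j - d' s j)) - N s * dv s := by
      simp only [hy, hd]
      rw [Finset.sum_sub_distrib, Finset.sum_sub_distrib, Finset.sum_add_distrib,
        Finset.sum_const, Finset.card_fin]
      push_cast [hN]
      ring
    have hNs : N s = ((ns s : ℝ) + 1) := rfl
    have hNs0 : ((ns s : ℝ) + 1) ≠ 0 := by positivity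
    show (∑ j, y s j) / N s = _
    rw [hs, hμ' s i, hNs]
    field_simp
  have hn' : n = ∑ s, N s := hn
  have hnpos : 0 < n := by
    rw [hn']; exact Finset.sum_pos (fun s _ => hNpos s) Finset.univ_nonempty
  set T := ∑ s, N s * yb s with hT
  set min2 := (∑ s, N s * (yb s)^2) - T^2 / n with hmin2
  have hw : ∀ μ : ℝ, ∑ s, N s * (yb s - μ)^2 = min2 + n * (μ - T/n)^2 := by
    intro μ
    have h1 : ∀ s : Fin (S+2), N s * (yb s - μ)^2
        = N s * (yb s)^2 - (2*μ)*(N s * yb s) + (μ^2) * N s := by intro s; ring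
    have h2 : ∑ s, N s * (yb s - μ)^2
        = (∑ s, N s * (yb s)^2) - (2*μ)*T + (μ^2) * n := by
      simp_rw [h1, Finset.sum_add_distrib, Finset.sum_sub_distrib, ← Finset.mul_sum,
        ← hT, ← hn']
    rw [h2, hmin2]
    field_simp
    ring
  -- rewrite h in terms of y
  have hcon : ∀ μ : ℝ, h μ (fun _ => 0) = c * (∑ s, Q s + ∑ s, N s * (yb s - μ)^2) := by
    intro μ
    rw [hh]
    congr 1
    have e0 : ∀ j, x 0 i j - μ - d 0 j = y 0 j - μ := by intro j; simp [hy]; ring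
    have es : ∀ (s : Fin (S+1)) (j : Fin (ns s.succ + 1)),
        x s.succ i j - μ - 0 - d s.succ j = y s.succ j - μ := by
      intro s j; simp [hy]; ring
    simp_rw [e0, es, key]
    rw [Finset.sum_add_distrib, Fin.sum_univ_succ (f := Q),
      Fin.sum_univ_succ (f := fun s => N s * (yb s - μ)^2)]
    ring
  have huncon : ∀ (μ : ℝ) (γv : Fin (S+1) → ℝ), h μ γv
      = c * ((Q 0 + N 0 * (yb 0 - μ)^2)
          + ∑ s : Fin (S+1), (Q s.succ + N s.succ * (yb s.succ - (μ + γv s))^2)) := by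
    intro μ γv
    rw [hh]
    congr 1
    have e0 : ∀ j, x 0 i j - μ - d 0 j = y 0 j - μ := by intro j; simp [hy]; ring
    have es : ∀ (s : Fin (S+1)) (j : Fin (ns s.succ + 1)),
        x s.succ i j - μ - γv s - d s.succ j = y s.succ j - (μ + γv s) := by
      intro s j; simp [hy]; ring
    simp_rw [e0, es, key]
  refine ⟨c * (∑ s, Q s + min2), c * ∑ s, Q s, ⟨⟨T/n, ?_⟩, ?_⟩, ⟨⟨yb 0, fun s => yb s.succ - yb 0, ?_⟩, ?_⟩, ?_⟩
  · rw [hcon, hw]; ring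
  · rintro v ⟨μ, rfl⟩
    rw [hcon, hw]
    have : 0 ≤ n * (μ - T/n)^2 := by positivity
    nlinarith [hcpos]
  · rw [huncon]
    have e0 : (yb 0 - yb 0) ^ 2 = 0 := by ring
    have es : ∀ s : Fin (S+1), (yb s.succ - (yb 0 + (yb s.succ - yb 0))) ^ 2 = 0 := by
      intro s; ring
    simp only [e0, es, mul_zero, add_zero]
    rw [Fin.sum_univ_succ (f := Q)]
  · rintro v ⟨μ, γv, rfl⟩
    rw [huncon]
    have h1 : (0:ℝ) ≤ N 0 * (yb 0 - μ)^2 := by positivity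
    have h2 : ∑ s : Fin (S+1), Q s.succ
        ≤ ∑ s : Fin (S+1), (Q s.succ + N s.succ * (yb s.succ - (μ + γv s))^2) := by
      refine Finset.sum_le_sum fun s _ => ?_
      nlinarith [hNpos s.succ, sq_nonneg (yb s.succ - (μ + γv s))]
    apply mul_le_mul_of_nonneg_left _ hcpos.le
    rw [Fin.sum_univ_succ (f := Q)]
    linarith
  · rw [hg]
    simp_rw [← hybar]
    have e1 : ∑ s, ((ns s:ℝ)+1) * (yb s)^2 = ∑ s, N s * (yb s)^2 := rfl
    have e2 : ∑ s, ((ns s:ℝ)+1) * (yb s) = T := rfl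
    rw [e1, e2, ← hc, hmin2]
    have hn0 : n ≠ 0 := ne_of_gt hnpos
    field_simp
    ring
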